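/- Let H be a Hilbert space, K : H → H a compact linear operator, and μ ∈ ℂ. An element f ∈ H lies in the range of I - μK if and only if f is orthogonal to the null space of I - conj(μ)K*, where K* is the adjoint of K. -/

import Mathlib

open scoped InnerProductSpace
open Filter Topology Metric

/-- Coercivity on the orthogonal complement of the kernel, for `T = I - C` with `C` compact. -/
lemma fredholm_coercive_aux
    {H : Type*} [NormedAddCommGroup H] [InnerProductSpace ℂ H] [CompleteSpace H]
    (C : H →L[ℂ] H) (hC : IsCompactOperator C) :
    ∃ c : ℝ, 0 < c ∧ ∀ x ∈ (LinearMap.ker ((ContinuousLinearMap.id ℂ H - C : H →L[ℂ] H) : H →ₗ[ℂ] H))ᗮ,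
      c * ‖x‖ ≤ ‖(ContinuousLinearMap.id ℂ H - C) x‖ := by
  set T : H →L[ℂ] H := ContinuousLinearMap.id ℂ H - C with hT
  set N : Submodule ℂ H := LinearMap.ker (T : H →ₗ[ℂ] H) with hN
  by_contra hcontra
  push_neg at hcontra
  have h' : ∀ n : ℕ, ∃ x, x ∈ Nᗮ ∧ ‖T x‖ < (1 / (n + 1)) * ‖x‖ := by
    intro n
    obtain ⟨x, hx1, hx2⟩ := hcontra (1 / (n + 1)) (by positivity)
    exact ⟨x, hx1, hx2⟩
  choose x hxmem hxlt using h'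
  have hxne : ∀ n, x n ≠ 0 := by
    intro n h0
    have := hxlt n
    rw [h0] at this
    simp at this
  set u : ℕ → H := fun n => (‖x n‖ : ℂ)⁻¹ • x n with hu
  have hnorm_ne : ∀ n, (‖x n‖ : ℝ) ≠ 0 := fun n => norm_ne_zero_iff.mpr (hxne n)
  have hunorm : ∀ n, ‖u n‖ = 1 := by
    intro n
    show ‖((‖x n‖ : ℂ))⁻¹ • x n‖ = 1
    have h1 : ‖((‖x n‖ : ℂ))⁻¹‖ = ‖x n‖⁻¹ := by
      simp [abs_of_nonneg (norm_nonneg (x n))]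
    rw [norm_smul, h1, inv_mul_cancel₀ (hnorm_ne n)]
  have humem : ∀ n, u n ∈ Nᗮ := fun n => Submodule.smul_mem _ _ (hxmem n)
  have huT : ∀ n, ‖T (u n)‖ ≤ 1 / (n + 1) := by
    intro n
    have : T (u n) = (‖x n‖ : ℂ)⁻¹ • T (x n) := by rw [hu]; simp [map_smul]
    rw [this, norm_smul]
    have h1 : ‖((‖x n‖ : ℂ))⁻¹‖ = ‖x n‖⁻¹ := by
      simp [abs_of_nonneg (norm_nonneg (x n))]
    rw [h1]
    have hpos : (0:ℝ) < ‖x n‖⁻¹ := inv_pos.mpr (norm_pos_iff.mpr (hxne n))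
    have := mul_le_mul_of_nonneg_left (le_of_lt (hxlt n)) hpos.le
    calc ‖x n‖⁻¹ * ‖T (x n)‖ ≤ ‖x n‖⁻¹ * ((1 / (n + 1)) * ‖x n‖) := this
      _ = 1 / (n + 1) := by
        rw [mul_comm (1 / ((n:ℝ) + 1)) ‖x n‖, ← mul_assoc, inv_mul_cancel₀ (hnorm_ne n), one_mul]
  have htend0 : Tendsto (fun n => T (u n)) atTop (𝓝 0) := by
    apply squeeze_zero_norm huT
    exact tendsto_one_div_add_atTop_nhds_zero_nat
  -- compactness
  have hCu : IsCompactOperator ⇑C := hC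
  obtain ⟨Kset, hKsetc, hKsub⟩ :=
    hCu.image_closedBall_subset_compact (f := (C : H →ₗ[ℂ] H)) 1
  have humemB : ∀ n, C (u n) ∈ Kset := by
    intro n
    apply hKsub
    exact ⟨u n, by simp [hunorm n], rfl⟩
  obtain ⟨a, _, φ, hφ, hφtend⟩ := hKsetc.tendsto_subseq humemB
  have hTu : Tendsto (fun n => T (u (φ n))) atTop (𝓝 0) :=
    htend0.comp hφ.tendsto_atTop
  have hdecomp : ∀ n, u (φ n) = T (u (φ n)) + C (u (φ n)) := by
    intro n; simp [hT, ContinuousLinearMap.sub_apply]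
  have hutend : Tendsto (fun n => u (φ n)) atTop (𝓝 a) := by
    have := hTu.add hφtend
    rw [zero_add] at this
    refine this.congr fun n => (hdecomp n).symm
  have haO : a ∈ Nᗮ := by
    have : IsClosed (Nᗮ : Set H) := Submodule.isClosed_orthogonal N
    exact this.mem_of_tendsto hutend (Eventually.of_forall fun n => humem (φ n))
  have haN : a ∈ N := by
    have hTa : Tendsto (fun n => T (u (φ n))) atTop (𝓝 (T a)) :=
      (T.continuous.tendsto a).comp hutend
    have : T a = 0 := tendsto_nhds_unique hTa hTu
    exact this
  have hnorm1 : ‖a‖ = 1 := by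
    have : Tendsto (fun n => ‖u (φ n)‖) atTop (𝓝 ‖a‖) :=
      (continuous_norm.tendsto a).comp hutend
    have h1 : Tendsto (fun n : ℕ => (1:ℝ)) atTop (𝓝 ‖a‖) :=
      this.congr fun n => hunorm (φ n)
    exact tendsto_nhds_unique h1 tendsto_const_nhds
  have : a = 0 := by
    have := (Submodule.mem_orthogonal N a).mp haO a haN
    exact inner_self_eq_zero.mp this
  rw [this] at hnorm1
  simp at hnorm1

/-- Fredholm alternative, solvability condition: `f ∈ R(I - μK)` iff `f` is orthogonal
to `N(I - conj(μ) K*)`. -/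
theorem fredholm_range_eq_orthogonal_of_adjoint_kernel
    {H : Type*} [NormedAddCommGroup H] [InnerProductSpace ℂ H] [CompleteSpace H]
    (K : H →L[ℂ] H) (hK : IsCompactOperator K) (μ : ℂ) (f : H) :
    f ∈ LinearMap.range ((ContinuousLinearMap.id ℂ H - μ • K : H →L[ℂ] H) : H →ₗ[ℂ] H) ↔
      ∀ v ∈ LinearMap.ker
          ((ContinuousLinearMap.id ℂ H - (starRingEnd ℂ μ) • ContinuousLinearMap.adjoint K :
            H →L[ℂ] H) : H →ₗ[ℂ] H),
        ⟪f, v⟫_ℂ = 0 := by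
  set C : H →L[ℂ] H := μ • K with hCdef
  have hC : IsCompactOperator ⇑C := hK.smul μ
  set T : H →L[ℂ] H := ContinuousLinearMap.id ℂ H - C with hT
  -- adjoint identity
  have hadj : ContinuousLinearMap.adjoint T
      = ContinuousLinearMap.id ℂ H - (starRingEnd ℂ μ) • ContinuousLinearMap.adjoint K := by
    rw [hT, hCdef, map_sub, ContinuousLinearMap.adjoint_id, map_smulₛₗ]
  set N : Submodule ℂ H := LinearMap.ker (T : H →ₗ[ℂ] H) with hN
  obtain ⟨c, hc, hcoer⟩ := fredholm_coercive_aux C hC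
  -- the restriction of T to Nᗮ
  set S : Nᗮ →L[ℂ] H := T.comp Nᗮ.subtypeL with hS
  have hanti : AntilipschitzWith (⟨c⁻¹, (inv_pos.mpr hc).le⟩ : NNReal) ⇑S := by
    apply S.antilipschitz_of_bound
    intro x
    have h1 : c * ‖(x : H)‖ ≤ ‖T (x : H)‖ := hcoer _ x.2
    have h2 : ‖S x‖ = ‖T (x : H)‖ := rfl
    have h3 : ‖x‖ = ‖(x : H)‖ := rfl
    show ‖(x : H)‖ ≤ c⁻¹ * ‖T (x : H)‖
    rw [le_inv_mul_iff₀ hc]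
    exact h1
  have hSrange_closed : IsClosed (Set.range ⇑S) :=
    hanti.isClosed_range S.uniformContinuous
  have hrange_eq : Set.range ⇑T = Set.range ⇑S := by
    apply Set.Subset.antisymm
    · rintro _ ⟨v, rfl⟩
      haveI : CompleteSpace N := (ContinuousLinearMap.isClosed_ker T).completeSpace_coe
      obtain ⟨y, hy, z, hz, rfl⟩ := N.exists_add_mem_mem_orthogonal v
      refine ⟨⟨z, hz⟩, ?_⟩
      have hy0 : T y = 0 := hy
      simp [hS, map_add, hy0]
    · rintro _ ⟨⟨z, hz⟩, rfl⟩
      exact ⟨z, rfl⟩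
  have hRclosed : IsClosed ((LinearMap.range (T : H →ₗ[ℂ] H) : Submodule ℂ H) : Set H) := by
    have : ((LinearMap.range (T : H →ₗ[ℂ] H) : Submodule ℂ H) : Set H) = Set.range ⇑T := by
      ext w; simp [LinearMap.mem_range]
    rw [this, hrange_eq]; exact hSrange_closed
  constructor
  · rintro ⟨v, rfl⟩ w hw
    have hw0 : ContinuousLinearMap.adjoint T w = 0 := by
      rw [hadj]; exact hw
    calc ⟪T v, w⟫_ℂ = ⟪v, ContinuousLinearMap.adjoint T w⟫_ℂ :=
          (ContinuousLinearMap.adjoint_inner_right T v w).symm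
      _ = 0 := by rw [hw0, inner_zero_right]
  · intro horth
    set R : Submodule ℂ H := LinearMap.range (T : H →ₗ[ℂ] H) with hR
    haveI : CompleteSpace R := hRclosed.completeSpace_coe
    obtain ⟨a, ha, b, hb, hfab⟩ := R.exists_add_mem_mem_orthogonal f
    have hbker : b ∈ LinearMap.ker
        ((ContinuousLinearMap.id ℂ H - (starRingEnd ℂ μ) • ContinuousLinearMap.adjoint K :
          H →L[ℂ] H) : H →ₗ[ℂ] H) := by
      rw [← hadj]
      have : ContinuousLinearMap.adjoint T b = 0 := by
        rw [← inner_self_eq_zero (𝕜 := ℂ)]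
        calc ⟪ContinuousLinearMap.adjoint T b, ContinuousLinearMap.adjoint T b⟫_ℂ
            = ⟪T (ContinuousLinearMap.adjoint T b), b⟫_ℂ :=
              ContinuousLinearMap.adjoint_inner_right T _ b
          _ = 0 := (Submodule.mem_orthogonal R b).mp hb _ ⟨_, rfl⟩
      exact this
    have hfb := horth b hbker
    have hab : ⟪a, b⟫_ℂ = 0 := (Submodule.mem_orthogonal R b).mp hb a ha
    have hbb : ⟪b, b⟫_ℂ = 0 := by
      have h5 : ⟪f, b⟫_ℂ = ⟪a, b⟫_ℂ + ⟪b, b⟫_ℂ := by rw [hfab, inner_add_left]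
      rw [hfb, hab, zero_add] at h5
      exact h5.symm
    have hb0 : b = 0 := inner_self_eq_zero.mp hbb
    rw [hfab, hb0, add_zero]
    exact ha
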